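/- Let H be the creation matrix of size (m+1)×(m+1). Then the matrix exponential e^{Hx} has entries (e^{Hx})_{ij} = C(i,j) x^{i-j} for i ≥ j and 0 otherwise; i.e., e^{Hx} equals the generalized Pascal matrix P(x). -/

import Mathlib

/-- The creation matrix: `(H)_{ij} = i` if `i = j+1`, else `0`. -/
def creationMatrix (m : ℕ) : Matrix (Fin (m+1)) (Fin (m+1)) ℝ :=
  Matrix.of fun i j => if (i : ℕ) = (j : ℕ) + 1 then (i : ℝ) else 0

/-- The generalized Pascal matrix `P(x)`. -/
def pascalMatrix (m : ℕ) (x : ℝ) : Matrix (Fin (m+1)) (Fin (m+1)) ℝ :=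
  Matrix.of fun i j =>
    if (j : ℕ) ≤ (i : ℕ) then ((i : ℕ).choose (j : ℕ) : ℝ) * x ^ ((i : ℕ) - (j : ℕ)) else 0

lemma creation_pow (m k : ℕ) (i j : Fin (m+1)) :
    (creationMatrix m ^ k) i j =
      if (i : ℕ) = (j : ℕ) + k then ((i : ℕ).descFactorial k : ℝ) else 0 := by
  induction k generalizing i j with
  | zero =>
    simp only [pow_zero, Matrix.one_apply, Nat.add_zero, Nat.descFactorial_zero, Nat.cast_one]
    congr 1
    simp [Fin.ext_iff]
  | succ k ih =>
    rw [pow_succ']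
    rw [Matrix.mul_apply]
    by_cases hi : (i : ℕ) = 0
    · rw [Finset.sum_eq_zero, if_neg (by omega)]
      intro l _
      simp [creationMatrix, hi]
    · have hi1 : (i : ℕ) - 1 < m + 1 := by omega
      set i' : Fin (m+1) := ⟨(i : ℕ) - 1, hi1⟩ with hi'
      rw [Finset.sum_eq_single i']
      · have hcast : (i' : ℕ) = (i : ℕ) - 1 := rfl
        have hH : creationMatrix m i i' = (i : ℝ) := by
          simp only [creationMatrix, Matrix.of_apply]
          rw [if_pos (by omega)]
        rw [hH, ih]
        by_cases h : (i : ℕ) = (j : ℕ) + (k + 1)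
        · rw [if_pos (by omega), if_pos h]
          obtain ⟨n, hn⟩ : ∃ n, (i : ℕ) = n + 1 := ⟨(i:ℕ) - 1, by omega⟩
          have hin : (i' : ℕ) = n := by omega
          rw [hin, hn, Nat.succ_descFactorial_succ]
          push_cast
          ring
        · rw [if_neg (by omega), if_neg h, mul_zero]
      · intro l _ hl
        by_cases hH : (i : ℕ) = (l : ℕ) + 1
        · exfalso
          apply hl
          apply Fin.ext
          simp [hi']
          omega
        · simp [creationMatrix, hH]
      · intro h
        exact absurd (Finset.mem_univ i') h

lemma creation_pow_eq_zero (m k : ℕ) (hk : m < k) : creationMatrix m ^ k = 0 := by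
  ext i j
  rw [creation_pow]
  rw [if_neg (by omega)]
  rfl

theorem exp_creationMatrix_eq_pascal (m : ℕ) (x : ℝ) :
    NormedSpace.exp (x • creationMatrix m) = pascalMatrix m x := by
  simp only [NormedSpace.exp_eq_tsum ℝ]
  have hzero : ∀ n ∉ Finset.range (m+1),
      ((n.factorial : ℝ)⁻¹ • (x • creationMatrix m) ^ n) = 0 := by
    intro n hn
    rw [smul_pow, creation_pow_eq_zero m n (by simpa using hn)]
    simp
  rw [tsum_eq_sum hzero]
  ext i j
  rw [Matrix.sum_apply]
  rw [Finset.sum_eq_single ((i : ℕ) - (j : ℕ))]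
  · simp only [smul_pow, Matrix.smul_apply, creation_pow, smul_eq_mul]
    by_cases h : (j : ℕ) ≤ (i : ℕ)
    · rw [if_pos (by omega)]
      simp only [pascalMatrix, Matrix.of_apply, if_pos h]
      rw [Nat.descFactorial_eq_factorial_mul_choose, Nat.choose_symm h]
      push_cast
      field_simp
    · rw [if_neg (by omega)]
      simp only [pascalMatrix, Matrix.of_apply, if_neg h]
      simp
  · intro n _ hn
    simp only [smul_pow, Matrix.smul_apply, creation_pow, smul_eq_mul]
    rw [if_neg (by omega)]
    simp
  · intro h
    exfalso
    apply h
    simp only [Finset.mem_range]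
    omega
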